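/- For every nonnegative integer k, the tree H_k has domination number γ(H_k) = 2k + 2 and exactly 2·5^k + 3^k minimum dominating sets, i.e., Γ(H_k) = 2·5^k + 3^k. -/

import Mathlib

/-- A set `D` of vertices is a dominating set if every vertex either lies in `D`
or is adjacent to a vertex of `D`. -/
def IsDominatingSet {V : Type*} (G : SimpleGraph V) (D : Finset V) : Prop :=
  ∀ v : V, v ∈ D ∨ ∃ w ∈ D, G.Adj v w

/-- The domination number: the minimum size of a dominating set. -/
noncomputable def dominationNumber {V : Type*} [Fintype V] (G : SimpleGraph V) : ℕ :=
  sInf {n | ∃ D : Finset V, IsDominatingSet G D ∧ D.card = n}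

/-- The number of minimum dominating sets. -/
noncomputable def numMinDomSets {V : Type*} [Fintype V] (G : SimpleGraph V) : ℕ :=
  Set.ncard {D : Finset V | IsDominatingSet G D ∧ D.card = dominationNumber G}

/-- The tree `G_k`: vertices `r = inl 0`, `s = inl 1`, and for each `i : Fin k` a path
`y_i x_i w_i v_i u_i = inr (i, 0), …, inr (i, 4)`; edges `r s`, `s y_i`, and the path edges. -/
def Gk (k : ℕ) : SimpleGraph (Fin 2 ⊕ (Fin k × Fin 5)) :=
  SimpleGraph.fromRel (fun a b =>
    (a = Sum.inl 0 ∧ b = Sum.inl 1) ∨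
    (∃ i : Fin k, a = Sum.inl 1 ∧ b = Sum.inr (i, 0)) ∨
    (∃ (i : Fin k) (j : Fin 4), a = Sum.inr (i, j.castSucc) ∧ b = Sum.inr (i, j.succ)))

/-- The tree `H_k`: obtained from `G_k` by appending a path `u v w` (here `inr 0, inr 1, inr 2`)
to the vertex `s = inl (inl 1)`, via edges `u v`, `v w`, `w s`. -/
def Hk (k : ℕ) : SimpleGraph ((Fin 2 ⊕ (Fin k × Fin 5)) ⊕ Fin 3) :=
  SimpleGraph.fromRel (fun a b =>
    (∃ x y, (Gk k).Adj x y ∧ a = Sum.inl x ∧ b = Sum.inl y) ∨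
    (a = Sum.inr 0 ∧ b = Sum.inr 1) ∨
    (a = Sum.inr 1 ∧ b = Sum.inr 2) ∨
    (a = Sum.inr 2 ∧ b = Sum.inl (Sum.inl 1)))

namespace HkProof

abbrev V (k : ℕ) := (Fin 2 ⊕ (Fin k × Fin 5)) ⊕ Fin 3

variable {k : ℕ}

def cvert : Fin 5 → V k
  | 0 => .inl (.inl 0)
  | 1 => .inl (.inl 1)
  | 2 => .inr 2
  | 3 => .inr 1
  | 4 => .inr 0

def pv (i : Fin k) (j : Fin 5) : V k := .inl (.inr (i, j))

def AdjSpec : V k → V k → Prop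
  | .inl (.inl a), .inl (.inl b) => a ≠ b
  | .inl (.inl a), .inl (.inr (_, j)) => a = 1 ∧ j = 0
  | .inl (.inr (_, j)), .inl (.inl a) => a = 1 ∧ j = 0
  | .inl (.inr (i, j)), .inl (.inr (i', j')) => i = i' ∧ (j.val + 1 = j'.val ∨ j'.val + 1 = j.val)
  | .inl (.inl a), .inr b => a = 1 ∧ b = 2
  | .inr b, .inl (.inl a) => a = 1 ∧ b = 2
  | .inl (.inr _), .inr _ => False
  | .inr _, .inl (.inr _) => False
  | .inr a, .inr b => a.val + 1 = b.val ∨ b.val + 1 = a.val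

lemma gk_adj (x y : Fin 2 ⊕ (Fin k × Fin 5)) :
    (Gk k).Adj x y ↔ AdjSpec (Sum.inl x : V k) (Sum.inl y) := by
  rcases x with (a | ⟨i, j⟩) <;> rcases y with (b | ⟨i', j'⟩) <;>
    simp only [Gk, SimpleGraph.fromRel_adj, AdjSpec, ne_eq, Sum.inl.injEq, Sum.inr.injEq,
      Prod.mk.injEq, Sum.inl_ne_inr, Sum.inr_ne_inl, false_and, and_false, exists_false,
      exists_and_left, or_false, false_or]
  · constructor
    · rintro ⟨hne, h⟩
      exact hne
    · intro hne
      refine ⟨hne, ?_⟩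
      fin_cases a <;> fin_cases b <;> simp_all
  · constructor
    · rintro ⟨hne, h⟩
      tauto
    · rintro ⟨rfl, rfl⟩
      simp
  · constructor
    · rintro ⟨hne, h⟩
      tauto
    · rintro ⟨rfl, rfl⟩
      simp
  · constructor
    · rintro ⟨hne, h⟩
      rcases h with (⟨i0, j0, ⟨rfl, rfl⟩, rfl, rfl⟩ | ⟨i0, j0, ⟨rfl, rfl⟩, rfl, rfl⟩)
      · exact ⟨rfl, Or.inl (by simp [Fin.castSucc, Fin.succ])⟩
      · exact ⟨rfl, Or.inr (by simp [Fin.castSucc, Fin.succ])⟩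
    · rintro ⟨rfl, (h | h)⟩
      · have hj : j.val < 4 := by omega
        refine ⟨?_, Or.inl ⟨i, ⟨j.val, hj⟩, ⟨rfl, by ext; simp⟩, rfl, by ext; simp [h]⟩⟩
        simp only [ne_eq, Prod.mk.injEq, true_and]
        intro hh
        rw [hh] at h; omega
      · have hj : j'.val < 4 := by omega
        refine ⟨?_, Or.inr ⟨i, ⟨j'.val, hj⟩, ⟨rfl, by ext; simp⟩, rfl, by ext; simp [h]⟩⟩
        simp only [ne_eq, Prod.mk.injEq, true_and]
        intro hh
        rw [hh] at h; omega


lemma hk_adj (v w : V k) : (Hk k).Adj v w ↔ v ≠ w ∧ AdjSpec v w := by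
  rcases v with (x | a) <;> rcases w with (y | b)
  · rw [show ((Hk k).Adj (.inl x) (.inl y) ↔ (Gk k).Adj x y) from ?_, gk_adj]
    · constructor
      · intro h
        refine ⟨fun hh => ?_, h⟩
        obtain rfl : x = y := by injection hh
        exact ((gk_adj x x).mpr h).ne rfl
      · exact fun h => h.2
    · simp only [Hk, SimpleGraph.fromRel_adj, ne_eq, Sum.inl.injEq, Sum.inl_ne_inr,
        Sum.inr_ne_inl, false_and, and_false, or_false, false_or, exists_and_left]
      constructor
      · rintro ⟨hne, (⟨x', y', hadj, rfl, rfl⟩ | ⟨x', y', hadj, rfl, rfl⟩)⟩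
        · exact hadj
        · exact hadj.symm
      · intro h
        exact ⟨by simpa using h.ne, Or.inl ⟨x, y, h, rfl, rfl⟩⟩
  · simp only [Hk, SimpleGraph.fromRel_adj, ne_eq, Sum.inl.injEq, Sum.inl_ne_inr,
      Sum.inr_ne_inl, false_and, and_false, or_false, false_or, exists_and_left,
      Sum.inr.injEq, exists_false]
    rcases x with (c | ⟨i, j⟩) <;>
      simp only [AdjSpec, Sum.inl.injEq, Sum.inl_ne_inr, Sum.inr_ne_inl, false_and, and_false,
        exists_false, or_false, false_or, not_false_iff, true_and] <;> tauto
  · simp only [Hk, SimpleGraph.fromRel_adj, ne_eq, Sum.inl.injEq, Sum.inl_ne_inr,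
      Sum.inr_ne_inl, false_and, and_false, or_false, false_or, exists_and_left,
      Sum.inr.injEq, exists_false]
    rcases y with (c | ⟨i, j⟩) <;>
      simp only [AdjSpec, Sum.inl.injEq, Sum.inl_ne_inr, Sum.inr_ne_inl, false_and, and_false,
        exists_false, or_false, false_or, not_false_iff, true_and] <;> tauto
  · simp only [Hk, SimpleGraph.fromRel_adj, ne_eq, Sum.inl.injEq, Sum.inl_ne_inr,
      Sum.inr_ne_inl, false_and, and_false, or_false, false_or, exists_and_left,
      Sum.inr.injEq, exists_false, AdjSpec]
    constructor
    · rintro ⟨hne, h⟩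
      refine ⟨fun hh => hne (by rw [hh]), ?_⟩
      fin_cases a <;> fin_cases b <;> simp_all
    · rintro ⟨hne, h⟩
      refine ⟨fun hh => hne hh, ?_⟩
      fin_cases a <;> fin_cases b <;> simp_all <;> omega


def NbrCond : V k → Finset (V k) → Prop
  | .inl (.inl a), D => (a = 0 ∧ (.inl (.inl 1) : V k) ∈ D) ∨
      (a = 1 ∧ ((.inl (.inl 0) : V k) ∈ D ∨ (.inr 2 : V k) ∈ D ∨ ∃ i, pv i 0 ∈ D))
  | .inl (.inr (i, j)), D => (j = 0 ∧ (.inl (.inl 1) : V k) ∈ D) ∨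
      ∃ j' : Fin 5, (j.val + 1 = j'.val ∨ j'.val + 1 = j.val) ∧ pv i j' ∈ D
  | .inr b, D => (∃ b' : Fin 3, (b.val + 1 = b'.val ∨ b'.val + 1 = b.val) ∧ (.inr b' : V k) ∈ D) ∨
      (b = 2 ∧ (.inl (.inl 1) : V k) ∈ D)

lemma exists_adj_iff (v : V k) (D : Finset (V k)) :
    (∃ w ∈ D, (Hk k).Adj v w) ↔ NbrCond v D := by
  constructor
  · rintro ⟨w, hw, hadj⟩
    rw [hk_adj] at hadj
    obtain ⟨hne, hspec⟩ := hadj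
    rcases v with ((a | ⟨i, j⟩) | b) <;> rcases w with ((a' | ⟨i', j'⟩) | b') <;>
      simp only [AdjSpec, NbrCond, pv] at hspec ⊢
    · fin_cases a <;> fin_cases a' <;> simp_all
    · obtain ⟨rfl, rfl⟩ := hspec
      exact Or.inr ⟨rfl, Or.inr (Or.inr ⟨i', hw⟩)⟩
    · obtain ⟨rfl, rfl⟩ := hspec
      exact Or.inr ⟨rfl, Or.inr (Or.inl hw)⟩
    · obtain ⟨rfl, rfl⟩ := hspec
      exact Or.inl ⟨rfl, hw⟩
    · obtain ⟨rfl, h⟩ := hspec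
      exact Or.inr ⟨j', h, hw⟩
    · obtain ⟨rfl, rfl⟩ := hspec
      exact Or.inr ⟨rfl, hw⟩
    · exact Or.inl ⟨b', hspec, hw⟩
  · rcases v with ((a | ⟨i, j⟩) | b) <;> simp only [NbrCond, pv]
    · rintro (⟨rfl, h⟩ | ⟨rfl, (h | h | ⟨i, h⟩)⟩)
      · exact ⟨_, h, (hk_adj _ _).mpr ⟨by simp, by simp [AdjSpec]⟩⟩
      · exact ⟨_, h, (hk_adj _ _).mpr ⟨by simp, by simp [AdjSpec]⟩⟩
      · exact ⟨_, h, (hk_adj _ _).mpr ⟨by simp, by simp [AdjSpec]⟩⟩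
      · exact ⟨_, h, (hk_adj _ _).mpr ⟨by simp [pv], by simp [pv, AdjSpec]⟩⟩
    · rintro (⟨rfl, h⟩ | ⟨j', hj, h⟩)
      · exact ⟨_, h, (hk_adj _ _).mpr ⟨by simp [pv], by simp [pv, AdjSpec]⟩⟩
      · refine ⟨_, h, (hk_adj _ _).mpr ⟨?_, ?_⟩⟩
        · simp only [pv, ne_eq, Sum.inl.injEq, Sum.inr.injEq, Prod.mk.injEq, not_and]
          intro _ hjj
          rw [hjj] at hj; omega
        · exact ⟨rfl, hj⟩
    · rintro (⟨b', hb, h⟩ | ⟨rfl, h⟩)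
      · refine ⟨_, h, (hk_adj _ _).mpr ⟨?_, Or.elim hb (fun h' => Or.inl h') Or.inr⟩⟩
        simp only [ne_eq, Sum.inr.injEq]
        intro hbb
        rw [hbb] at hb; omega
      · exact ⟨_, h, (hk_adj _ _).mpr ⟨by simp, by simp [AdjSpec]⟩⟩


def csf (D : Finset (V k)) : Finset (Fin 5) := Finset.univ.filter (fun j => cvert j ∈ D)
def bsf (D : Finset (V k)) (i : Fin k) : Finset (Fin 5) := Finset.univ.filter (fun j => pv i j ∈ D)

@[simp] lemma mem_csf {D : Finset (V k)} {j : Fin 5} : j ∈ csf D ↔ cvert j ∈ D := by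
  simp [csf]

@[simp] lemma mem_bsf {D : Finset (V k)} {i : Fin k} {j : Fin 5} : j ∈ bsf D i ↔ pv i j ∈ D := by
  simp [bsf]

variable {D : Finset (V k)}

lemma domv_c0 : ((cvert 0 : V k) ∈ D ∨ NbrCond (cvert 0) D) ↔ (0 ∈ csf D ∨ 1 ∈ csf D) := by
  simp only [mem_csf, cvert, NbrCond]
  constructor
  · rintro (h | (⟨_, h⟩ | ⟨h, _⟩))
    · exact Or.inl h
    · exact Or.inr h
    · exact absurd h (by decide)
  · rintro (h | h)
    · exact Or.inl h
    · exact Or.inr (Or.inl ⟨by trivial, h⟩)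

lemma domv_c1 : ((cvert 1 : V k) ∈ D ∨ NbrCond (cvert 1) D) ↔
    (1 ∈ csf D ∨ 0 ∈ csf D ∨ 2 ∈ csf D ∨ ∃ i, 0 ∈ bsf D i) := by
  simp only [mem_csf, mem_bsf, cvert, NbrCond]
  constructor
  · rintro (h | (⟨h, _⟩ | ⟨_, h⟩))
    · exact Or.inl h
    · exact absurd h (by decide)
    · exact Or.inr h
  · rintro (h | h)
    · exact Or.inl h
    · exact Or.inr (Or.inr ⟨by trivial, h⟩)

lemma domv_c2 : ((cvert 2 : V k) ∈ D ∨ NbrCond (cvert 2) D) ↔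
    (2 ∈ csf D ∨ 1 ∈ csf D ∨ 3 ∈ csf D) := by
  simp only [mem_csf, cvert, NbrCond]
  constructor
  · rintro (h | (⟨b', hb, h⟩ | ⟨_, h⟩))
    · exact Or.inl h
    · fin_cases b' <;> simp_all <;> omega
    · exact Or.inr (Or.inl h)
  · rintro (h | h | h)
    · exact Or.inl h
    · exact Or.inr (Or.inr ⟨by trivial, h⟩)
    · exact Or.inr (Or.inl ⟨1, by decide, h⟩)

lemma domv_c3 : ((cvert 3 : V k) ∈ D ∨ NbrCond (cvert 3) D) ↔
    (3 ∈ csf D ∨ 2 ∈ csf D ∨ 4 ∈ csf D) := by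
  simp only [mem_csf, cvert, NbrCond]
  constructor
  · rintro (h | (⟨b', hb, h⟩ | ⟨h, _⟩))
    · exact Or.inl h
    · fin_cases b' <;> simp_all <;> omega
    · exact absurd h (by decide)
  · rintro (h | h | h)
    · exact Or.inl h
    · exact Or.inr (Or.inl ⟨2, by decide, h⟩)
    · exact Or.inr (Or.inl ⟨0, by decide, h⟩)

lemma domv_c4 : ((cvert 4 : V k) ∈ D ∨ NbrCond (cvert 4) D) ↔
    (4 ∈ csf D ∨ 3 ∈ csf D) := by
  simp only [mem_csf, cvert, NbrCond]
  constructor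
  · rintro (h | (⟨b', hb, h⟩ | ⟨h, _⟩))
    · exact Or.inl h
    · fin_cases b' <;> simp_all <;> omega
    · exact absurd h (by decide)
  · rintro (h | h)
    · exact Or.inl h
    · exact Or.inr (Or.inl ⟨1, by decide, h⟩)

lemma domv_p0 {i : Fin k} : (pv i 0 ∈ D ∨ NbrCond (pv i 0) D) ↔
    (0 ∈ bsf D i ∨ 1 ∈ bsf D i ∨ 1 ∈ csf D) := by
  simp only [mem_csf, mem_bsf, cvert, pv, NbrCond]
  constructor
  · rintro (h | (⟨_, h⟩ | ⟨j', hj, h⟩))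
    · exact Or.inl h
    · exact Or.inr (Or.inr h)
    · fin_cases j' <;> simp_all <;> omega
  · rintro (h | h | h)
    · exact Or.inl h
    · exact Or.inr (Or.inr ⟨1, by decide, h⟩)
    · exact Or.inr (Or.inl ⟨by trivial, h⟩)

lemma domv_p1 {i : Fin k} : (pv i 1 ∈ D ∨ NbrCond (pv i 1) D) ↔
    (1 ∈ bsf D i ∨ 0 ∈ bsf D i ∨ 2 ∈ bsf D i) := by
  simp only [mem_bsf, pv, NbrCond]
  constructor
  · rintro (h | (⟨h, _⟩ | ⟨j', hj, h⟩))
    · exact Or.inl h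
    · exact absurd h (by decide)
    · fin_cases j' <;> simp_all <;> omega
  · rintro (h | h | h)
    · exact Or.inl h
    · exact Or.inr (Or.inr ⟨0, by decide, h⟩)
    · exact Or.inr (Or.inr ⟨2, by decide, h⟩)

lemma domv_p2 {i : Fin k} : (pv i 2 ∈ D ∨ NbrCond (pv i 2) D) ↔
    (2 ∈ bsf D i ∨ 1 ∈ bsf D i ∨ 3 ∈ bsf D i) := by
  simp only [mem_bsf, pv, NbrCond]
  constructor
  · rintro (h | (⟨h, _⟩ | ⟨j', hj, h⟩))
    · exact Or.inl h
    · exact absurd h (by decide)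
    · fin_cases j' <;> simp_all <;> omega
  · rintro (h | h | h)
    · exact Or.inl h
    · exact Or.inr (Or.inr ⟨1, by decide, h⟩)
    · exact Or.inr (Or.inr ⟨3, by decide, h⟩)

lemma domv_p3 {i : Fin k} : (pv i 3 ∈ D ∨ NbrCond (pv i 3) D) ↔
    (3 ∈ bsf D i ∨ 2 ∈ bsf D i ∨ 4 ∈ bsf D i) := by
  simp only [mem_bsf, pv, NbrCond]
  constructor
  · rintro (h | (⟨h, _⟩ | ⟨j', hj, h⟩))
    · exact Or.inl h
    · exact absurd h (by decide)
    · fin_cases j' <;> simp_all <;> omega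
  · rintro (h | h | h)
    · exact Or.inl h
    · exact Or.inr (Or.inr ⟨2, by decide, h⟩)
    · exact Or.inr (Or.inr ⟨4, by decide, h⟩)

lemma domv_p4 {i : Fin k} : (pv i 4 ∈ D ∨ NbrCond (pv i 4) D) ↔
    (4 ∈ bsf D i ∨ 3 ∈ bsf D i) := by
  simp only [mem_bsf, pv, NbrCond]
  constructor
  · rintro (h | (⟨h, _⟩ | ⟨j', hj, h⟩))
    · exact Or.inl h
    · exact absurd h (by decide)
    · fin_cases j' <;> simp_all <;> omega
  · rintro (h | h)
    · exact Or.inl h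
    · exact Or.inr (Or.inr ⟨3, by decide, h⟩)


def Cok (c : Finset (Fin 5)) : Prop :=
  (0 ∈ c ∨ 1 ∈ c) ∧ (2 ∈ c ∨ 1 ∈ c ∨ 3 ∈ c) ∧ (3 ∈ c ∨ 2 ∈ c ∨ 4 ∈ c) ∧ (4 ∈ c ∨ 3 ∈ c)

def Bok (b : Finset (Fin 5)) : Prop :=
  (1 ∈ b ∨ 0 ∈ b ∨ 2 ∈ b) ∧ (2 ∈ b ∨ 1 ∈ b ∨ 3 ∈ b) ∧ (3 ∈ b ∨ 2 ∈ b ∨ 4 ∈ b) ∧ (4 ∈ b ∨ 3 ∈ b)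

lemma dom_char : IsDominatingSet (Hk k) D ↔
    (Cok (csf D) ∧ (1 ∈ csf D ∨ 0 ∈ csf D ∨ 2 ∈ csf D ∨ ∃ i, 0 ∈ bsf D i) ∧
     ∀ i, Bok (bsf D i) ∧ (0 ∈ bsf D i ∨ 1 ∈ bsf D i ∨ 1 ∈ csf D)) := by
  have key : ∀ v : V k, (v ∈ D ∨ ∃ w ∈ D, (Hk k).Adj v w) ↔ (v ∈ D ∨ NbrCond v D) := by
    intro v
    rw [exists_adj_iff]
  unfold IsDominatingSet
  constructor
  · intro h
    have h' : ∀ v : V k, v ∈ D ∨ NbrCond v D := fun v => (key v).mp (h v)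
    exact ⟨⟨domv_c0.mp (h' _), domv_c2.mp (h' _), domv_c3.mp (h' _), domv_c4.mp (h' _)⟩,
      domv_c1.mp (h' _),
      fun i => ⟨⟨domv_p1.mp (h' _), domv_p2.mp (h' _), domv_p3.mp (h' _), domv_p4.mp (h' _)⟩,
        domv_p0.mp (h' _)⟩⟩
  · rintro ⟨⟨hc0, hc2, hc3, hc4⟩, hc1, hb⟩ v
    rw [key]
    rcases v with ((a | ⟨i, j⟩) | b)
    · fin_cases a
      · exact domv_c0.mpr hc0
      · exact domv_c1.mpr hc1
    · fin_cases j
      · exact domv_p0.mpr (hb i).2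
      · exact domv_p1.mpr (hb i).1.1
      · exact domv_p2.mpr (hb i).1.2.1
      · exact domv_p3.mpr (hb i).1.2.2.1
      · exact domv_p4.mpr (hb i).1.2.2.2
    · fin_cases b
      · exact domv_c4.mpr hc4
      · exact domv_c3.mpr hc3
      · exact domv_c2.mpr hc2


def eV : V k ≃ (Fin 5 ⊕ (Fin k × Fin 5)) where
  toFun v := match v with
    | .inl (.inl a) => .inl (a.castLE (by omega))
    | .inl (.inr q) => .inr q
    | .inr b => .inl (⟨4 - b.val, by omega⟩ : Fin 5)
  invFun x := match x with
    | .inl j => cvert j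
    | .inr (i, j) => pv i j
  left_inv v := by
    rcases v with ((a | q) | b)
    · fin_cases a <;> rfl
    · rfl
    · fin_cases b <;> rfl
  right_inv x := by
    rcases x with (j | ⟨i, j⟩)
    · fin_cases j <;> rfl
    · rfl

@[simp] lemma eV_symm_inl (j : Fin 5) : (eV (k := k)).symm (.inl j) = cvert j := rfl

@[simp] lemma eV_symm_inr (i : Fin k) (j : Fin 5) : (eV (k := k)).symm (.inr (i, j)) = pv i j := rfl

lemma toLeft_map : (D.map eV.toEmbedding).toLeft = csf D := by
  ext j
  simp [Finset.mem_toLeft, Finset.mem_map_equiv, csf]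

lemma toRight_map : (D.map eV.toEmbedding).toRight =
    Finset.univ.filter (fun q : Fin k × Fin 5 => pv q.1 q.2 ∈ D) := by
  ext ⟨i, j⟩
  simp [Finset.mem_toRight, Finset.mem_map_equiv]

lemma card_decomp : D.card = (csf D).card + ∑ i : Fin k, (bsf D i).card := by
  have h1 : D.card = (D.map eV.toEmbedding).card := (Finset.card_map _).symm
  rw [h1, ← Finset.card_toLeft_add_card_toRight, toLeft_map, toRight_map]
  congr 1
  rw [Finset.card_eq_sum_card_fiberwise (f := Prod.fst) (t := Finset.univ) (by simp)]
  refine Finset.sum_congr rfl fun i _ => ?_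
  refine Finset.card_bij' (fun q _ => q.2) (fun j _ => (i, j)) ?_ ?_ ?_ ?_
  · rintro ⟨i', j⟩ hq
    simp only [Finset.mem_filter, Finset.mem_univ, true_and] at hq
    obtain ⟨h, rfl⟩ := hq
    simpa using h
  · intro j hj
    simp only [Finset.mem_filter, Finset.mem_univ, true_and]
    exact ⟨by simpa using hj, trivial⟩
  · rintro ⟨i', j⟩ hq
    simp only [Finset.mem_filter, Finset.mem_univ, true_and] at hq
    obtain ⟨h, rfl⟩ := hq
    rfl
  · intro j hj
    rfl


lemma cvert_inj : Function.Injective (cvert (k := k)) := by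
  intro a b h
  fin_cases a <;> fin_cases b <;> simp_all [cvert]

lemma cvert_ne_pv (j : Fin 5) (i : Fin k) (j' : Fin 5) : cvert j ≠ pv i j' := by
  fin_cases j <;> simp [cvert, pv]

lemma pv_inj {i i' : Fin k} {j j' : Fin 5} : pv i j = pv i' j' ↔ i = i' ∧ j = j' := by
  simp [pv, Prod.ext_iff]

instance : DecidablePred Cok := fun c => by unfold Cok; infer_instance
instance : DecidablePred Bok := fun b => by unfold Bok; infer_instance

def cfg : Fin 5 → Finset (Fin 5) := ![{0, 3}, {1, 3}, {1, 4}, {2, 3}, {2, 4}]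

def ccfgS : Fin 2 → Finset (Fin 5) := ![{1, 4}, {1, 3}]

def build (c : Finset (Fin 5)) (f : Fin k → Finset (Fin 5)) : Finset (V k) :=
  c.image cvert ∪ Finset.univ.biUnion (fun i => (f i).image (pv i))

lemma csf_build (c : Finset (Fin 5)) (f : Fin k → Finset (Fin 5)) : csf (build c f) = c := by
  ext j
  simp only [mem_csf, build, Finset.mem_union, Finset.mem_image, Finset.mem_biUnion,
    Finset.mem_univ, true_and]
  constructor
  · rintro (⟨j', hj', he⟩ | ⟨i, j', hj', he⟩)
    · rwa [← cvert_inj he]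
    · exact absurd he.symm (cvert_ne_pv _ _ _)
  · intro h
    exact Or.inl ⟨j, h, rfl⟩

lemma bsf_build (c : Finset (Fin 5)) (f : Fin k → Finset (Fin 5)) (i : Fin k) :
    bsf (build c f) i = f i := by
  ext j
  simp only [mem_bsf, build, Finset.mem_union, Finset.mem_image, Finset.mem_biUnion,
    Finset.mem_univ, true_and]
  constructor
  · rintro (⟨j', hj', he⟩ | ⟨i', j', hj', he⟩)
    · exact absurd he (cvert_ne_pv _ _ _)
    · obtain ⟨rfl, rfl⟩ := pv_inj.mp he
      exact hj'
  · intro h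
    exact Or.inr ⟨i, j, h, rfl⟩

lemma eq_of_components {D D' : Finset (V k)} (hc : csf D = csf D')
    (hb : ∀ i, bsf D i = bsf D' i) : D = D' := by
  ext v
  rcases v with ((a | ⟨i, j⟩) | b)
  · fin_cases a
    · have := Finset.ext_iff.mp hc 0
      simpa [mem_csf, cvert] using this
    · have := Finset.ext_iff.mp hc 1
      simpa [mem_csf, cvert] using this
  · have := Finset.ext_iff.mp (hb i) j
    simpa [mem_bsf, pv] using this
  · fin_cases b
    · have := Finset.ext_iff.mp hc 4
      simpa [mem_csf, cvert] using this
    · have := Finset.ext_iff.mp hc 3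
      simpa [mem_csf, cvert] using this
    · have := Finset.ext_iff.mp hc 2
      simpa [mem_csf, cvert] using this

-- decidable facts about configurations
lemma Cok_lb : ∀ c : Finset (Fin 5), Cok c → 2 ≤ c.card := by decide
lemma Bok_lb : ∀ b : Finset (Fin 5), Bok b → 2 ≤ b.card := by decide
lemma Cok_classify : ∀ c : Finset (Fin 5), Cok c → c.card = 2 →
    c = ccfgS 0 ∨ c = ccfgS 1 ∨ c = {0, 3} := by decide
lemma Bok_classify : ∀ b : Finset (Fin 5), Bok b → b.card = 2 → ∃ v : Fin 5, cfg v = b := by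
  decide
lemma Bok_classify_full : ∀ b : Finset (Fin 5), Bok b → (0 ∈ b ∨ 1 ∈ b) → b.card = 2 →
    ∃ v : Fin 3, cfg (v.castLE (by omega)) = b := by decide
lemma cfg_inj : Function.Injective cfg := by decide
lemma cfg_card : ∀ v : Fin 5, (cfg v).card = 2 := by decide
lemma Bok_cfg : ∀ v : Fin 5, Bok (cfg v) := by decide
lemma cfg_full : ∀ v : Fin 3, (0 ∈ cfg (v.castLE (by omega)) ∨ 1 ∈ cfg (v.castLE (by omega))) := by
  decide
lemma Cok_ccfgS : ∀ a : Fin 2, Cok (ccfgS a) := by decide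
lemma ccfgS_card : ∀ a : Fin 2, (ccfgS a).card = 2 := by decide
lemma one_mem_ccfgS : ∀ a : Fin 2, (1 : Fin 5) ∈ ccfgS a := by decide
lemma ccfgS_inj : Function.Injective ccfgS := by decide
lemma ccfgS_ne : ∀ a : Fin 2, ccfgS a ≠ {0, 3} := by decide
lemma Cok_noS : Cok {0, 3} := by decide
lemma noS_card : ({0, 3} : Finset (Fin 5)).card = 2 := by decide


def Idx (k : ℕ) := (Fin 2 × (Fin k → Fin 5)) ⊕ (Fin k → Fin 3)

def F : Idx k → Finset (V k)
  | .inl (a, f) => build (ccfgS a) (fun i => cfg (f i))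
  | .inr g => build {0, 3} (fun i => cfg ((g i).castLE (by omega)))

lemma sum_two : (∑ _i : Fin k, 2) = 2 * k := by
  simp [Finset.sum_const, Finset.card_univ, mul_comm]

lemma F_card (x : Idx k) : (F x).card = 2 * k + 2 := by
  rcases x with (⟨a, f⟩ | g) <;>
    rw [F, card_decomp, csf_build] <;>
    simp only [bsf_build, cfg_card, sum_two, ccfgS_card, noS_card] <;>
    omega

lemma F_dom (x : Idx k) : IsDominatingSet (Hk k) (F x) := by
  rw [dom_char]
  rcases x with (⟨a, f⟩ | g) <;> rw [F] <;>
    simp only [csf_build, bsf_build]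
  · exact ⟨Cok_ccfgS a, Or.inl (one_mem_ccfgS a),
      fun i => ⟨Bok_cfg _, Or.inr (Or.inr (one_mem_ccfgS a))⟩⟩
  · refine ⟨Cok_noS, Or.inr (Or.inl (by decide)), fun i => ⟨Bok_cfg _, ?_⟩⟩
    rcases cfg_full (g i) with h | h
    · exact Or.inl h
    · exact Or.inr (Or.inl h)

lemma F_inj : Function.Injective (F (k := k)) := by
  intro x y h
  have hc : csf (F x) = csf (F y) := by rw [h]
  have hb : ∀ i, bsf (F x) i = bsf (F y) i := fun i => by rw [h]
  rcases x with (⟨a, f⟩ | g) <;> rcases y with (⟨a', f'⟩ | g') <;>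
    simp only [F, csf_build, bsf_build] at hc hb
  · obtain rfl := ccfgS_inj hc
    congr 1
    ext1
    · rfl
    · funext i
      exact cfg_inj (hb i)
  · exact absurd hc (ccfgS_ne a)
  · exact absurd hc.symm (ccfgS_ne a')
  · congr 1
    funext i
    have := cfg_inj (hb i)
    exact Fin.ext (by simpa [Fin.castLE] using congrArg Fin.val this)

lemma dom_card_lb (hD : IsDominatingSet (Hk k) D) : 2 * k + 2 ≤ D.card := by
  obtain ⟨hC, _, hB⟩ := dom_char.mp hD
  have l1 := Cok_lb _ hC
  have l2 : (∑ _i : Fin k, 2) ≤ ∑ i, (bsf D i).card :=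
    Finset.sum_le_sum (fun i _ => Bok_lb _ (hB i).1)
  rw [sum_two] at l2
  have := card_decomp (D := D)
  omega

lemma F_surj_on (hD : IsDominatingSet (Hk k) D) (hcard : D.card = 2 * k + 2) :
    ∃ x : Idx k, F x = D := by
  obtain ⟨hC, hS, hB⟩ := dom_char.mp hD
  have l1 := Cok_lb _ hC
  have l2 : ∀ i, 2 ≤ (bsf D i).card := fun i => Bok_lb _ (hB i).1
  have l2' : (∑ _i : Fin k, 2) ≤ ∑ i, (bsf D i).card := Finset.sum_le_sum (fun i _ => l2 i)
  rw [sum_two] at l2'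
  have hdec := card_decomp (D := D)
  have hc2 : (csf D).card = 2 := by omega
  have hb2 : ∀ i, (bsf D i).card = 2 := by
    by_contra hcon
    push_neg at hcon
    obtain ⟨i0, hi0⟩ := hcon
    have h3 : 2 < (bsf D i0).card := lt_of_le_of_ne (l2 i0) (Ne.symm hi0)
    have : (∑ _i : Fin k, 2) < ∑ i, (bsf D i).card :=
      Finset.sum_lt_sum (fun i _ => l2 i) ⟨i0, Finset.mem_univ _, h3⟩
    rw [sum_two] at this
    omega
  rcases Cok_classify _ hC hc2 with h | h | h
  · choose f hf using fun i => Bok_classify _ (hB i).1 (hb2 i)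
    refine ⟨.inl (0, f), eq_of_components ?_ ?_⟩
    · rw [F, csf_build, h]
    · intro i
      rw [F, bsf_build, hf i]
  · choose f hf using fun i => Bok_classify _ (hB i).1 (hb2 i)
    refine ⟨.inl (1, f), eq_of_components ?_ ?_⟩
    · rw [F, csf_build, h]
    · intro i
      rw [F, bsf_build, hf i]
  · have h1 : (1 : Fin 5) ∉ csf D := by
      rw [h]; decide
    have hfull : ∀ i, 0 ∈ bsf D i ∨ 1 ∈ bsf D i := by
      intro i
      rcases (hB i).2 with hh | hh | hh
      · exact Or.inl hh
      · exact Or.inr hh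
      · exact absurd hh h1
    choose g hg using fun i => Bok_classify_full _ (hB i).1 (hfull i) (hb2 i)
    refine ⟨.inr g, eq_of_components ?_ ?_⟩
    · rw [F, csf_build, h]
    · intro i
      rw [F, bsf_build, hg i]

instance : Fintype (Idx k) := by unfold Idx; infer_instance

lemma card_Idx : Fintype.card (Idx k) = 2 * 5 ^ k + 3 ^ k := by
  show Fintype.card ((Fin 2 × (Fin k → Fin 5)) ⊕ (Fin k → Fin 3)) = _
  simp [Fintype.card_fun]

lemma domNum : dominationNumber (Hk k) = 2 * k + 2 := by
  have hmem : 2 * k + 2 ∈ {n | ∃ D : Finset (V k), IsDominatingSet (Hk k) D ∧ D.card = n} :=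
    ⟨F (.inl (0, fun _ => 0)), F_dom _, F_card _⟩
  refine le_antisymm (Nat.sInf_le hmem) (le_csInf ⟨_, hmem⟩ ?_)
  rintro n ⟨D, hD, rfl⟩
  exact dom_card_lb hD

lemma numMin : numMinDomSets (Hk k) = 2 * 5 ^ k + 3 ^ k := by
  unfold numMinDomSets
  rw [domNum]
  have hset : {D : Finset (V k) | IsDominatingSet (Hk k) D ∧ D.card = 2 * k + 2} =
      Set.range (F (k := k)) := by
    ext D
    constructor
    · rintro ⟨h1, h2⟩
      obtain ⟨x, hx⟩ := F_surj_on h1 h2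
      exact ⟨x, hx⟩
    · rintro ⟨x, rfl⟩
      exact ⟨F_dom x, F_card x⟩
  rw [hset, ← Set.image_univ, Set.ncard_image_of_injective _ F_inj, Set.ncard_univ,
    Nat.card_eq_fintype_card, card_Idx]

end HkProof

/-- `H_k` has domination number `2k + 2` and exactly `2·5^k + 3^k` minimum dominating sets. -/
theorem Hk_dominationNumber_and_numMinDomSets (k : ℕ) :
    dominationNumber (Hk k) = 2 * k + 2 ∧ numMinDomSets (Hk k) = 2 * 5 ^ k + 3 ^ k :=
  ⟨HkProof.domNum, HkProof.numMin⟩
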